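/- In the strict SLS regime where δ_{ki} + δ_{ij} > δ_{kj} holds for all pairwise distinct i,j,k, the following holds: if d ∈ ℝ_+^K satisfies all cycle bounds (Σ_{k∈π} d_k ≤ Δ_π for all cycles π, with Δ_π = Σ_m δ_{π(m)π(m+1)} for non-trivial π and Δ_{(i↺)} = α_{ii}), and d attains equality on a cycle π_o = (i_1 → ... → i_M ↺) of length M > 2 with d_{i_M} = 0, then a contradiction results: one derives δ_{i_{M−1} i_M} + δ_{i_M i_1} ≤ δ_{i_{M−1} i_1}, contradicting strictness. -/
import Mathlib


/-- In the strict SLS regime (`δ_{ki} + δ_{ij} > δ_{kj}` for pairwise distinct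
`i,j,k`), no point `d ≥ 0` satisfying all cycle bounds can attain equality on a cycle
of length `M > 2` while having `d = 0` at the last user of that cycle. -/
theorem strict_sls_tight_long_cycle_contradiction (K : ℕ)
    (α : Fin K → Fin K → ℝ) (hnn : ∀ i j, 0 ≤ α i j)
    (δ : Fin K → Fin K → ℝ)
    (hδ : ∀ i j : Fin K, i ≠ j → δ i j = α i i - α j i)
    (hstrict : ∀ i j k : Fin K, i ≠ j → j ≠ k → i ≠ k → δ k i + δ i j > δ k j)
    (d : Fin K → ℝ) (hd : ∀ k, 0 ≤ d k)
    (hsingle : ∀ i, d i ≤ α i i)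
    (hcyc : ∀ (M : ℕ) (hM : 2 ≤ M) (σ : Fin M → Fin K), Function.Injective σ →
      ∑ m : Fin M, d (σ m) ≤ ∑ m : Fin M, δ (σ m) (σ (m + ⟨1, hM⟩)))
    (M : ℕ) (hM : 2 < M) (σ : Fin M → Fin K) (hσ : Function.Injective σ)
    (htight : ∑ m : Fin M, d (σ m) = ∑ m : Fin M, δ (σ m) (σ (m + ⟨1, by omega⟩)))
    (hzero : d (σ ⟨M - 1, by omega⟩) = 0) :
    False := by
  obtain ⟨Q, rfl⟩ : ∃ Q, M = Q + 3 := ⟨M - 3, by omega⟩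
  have hone3 : ∀ (h : 1 < Q + 3), (⟨1, h⟩ : Fin (Q+3)) = 1 := fun h => by
    ext; simp [Fin.val_one]
  have hone2 : ∀ (h : 1 < Q + 2), (⟨1, h⟩ : Fin (Q+2)) = 1 := fun h => by
    ext; simp [Fin.val_one]
  obtain ⟨τ, hτdef⟩ : ∃ τ : Fin (Q+2) → Fin K, τ = fun m => σ m.castSucc := ⟨_, rfl⟩
  have hτinj : Function.Injective τ := by
    rw [hτdef]; exact fun a b h => Fin.castSucc_injective _ (hσ h)
  have hbound := hcyc (Q+2) (by omega) τ hτinj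
  rw [hone2] at hbound
  rw [hone3] at htight
  obtain ⟨A, hA⟩ : ∃ A : ℝ,
      A = ∑ m : Fin (Q+1), δ (σ m.castSucc.castSucc) (σ m.succ.castSucc) := ⟨_, rfl⟩
  have t1 : ∀ m : Fin (Q+1), (m.castSucc.castSucc : Fin (Q+3)) + 1 = m.succ.castSucc :=
    fun m => by rw [Fin.coeSucc_eq_succ, Fin.succ_castSucc]
  have t2' : ((Fin.last (Q+1)).castSucc : Fin (Q+3)) = ⟨Q+1, by omega⟩ := rfl
  have t4 : (⟨Q+1, by omega⟩ : Fin (Q+3)) + 1 = ⟨Q+2, by omega⟩ := by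
    ext; simp [Fin.add_def]
  have t5 : (Fin.last (Q+2)) = (⟨Q+2, by omega⟩ : Fin (Q+3)) := rfl
  have t6 : (⟨Q+2, by omega⟩ : Fin (Q+3)) + 1 = 0 := by
    ext; simp [Fin.add_def]
  have hz' : d (σ (Fin.last (Q+2))) = 0 := hzero
  have e1 : ∑ m : Fin (Q+3), d (σ m) = ∑ m : Fin (Q+2), d (τ m) := by
    rw [hτdef]
    simp only [Fin.sum_univ_castSucc, hz', add_zero]
  have e2 : ∑ m : Fin (Q+3), δ (σ m) (σ (m + 1))
      = A + δ (σ ⟨Q+1, by omega⟩) (σ ⟨Q+2, by omega⟩) + δ (σ ⟨Q+2, by omega⟩) (σ 0) := by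
    simp only [t6, Fin.sum_univ_castSucc, t1, t2', t4, t5, hA]
  have e3 : ∑ m : Fin (Q+2), δ (τ m) (τ (m + 1))
      = A + δ (σ ⟨Q+1, by omega⟩) (σ 0) := by
    rw [hτdef]
    simp only [Fin.sum_univ_castSucc, Fin.coeSucc_eq_succ, Fin.last_add_one,
      Fin.castSucc_zero, t2', hA]
  rw [e1, e2] at htight
  rw [e3] at hbound
  have hne1 : σ ⟨Q+2, by omega⟩ ≠ σ 0 := hσ.ne (by simp [Fin.ext_iff])
  have hne2 : σ (0 : Fin (Q+3)) ≠ σ ⟨Q+1, by omega⟩ := hσ.ne (by simp [Fin.ext_iff])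
  have hne3 : σ ⟨Q+2, by omega⟩ ≠ σ ⟨Q+1, by omega⟩ := hσ.ne (by simp [Fin.ext_iff])
  have := hstrict (σ ⟨Q+2, by omega⟩) (σ 0) (σ ⟨Q+1, by omega⟩) hne1 hne2 hne3
  linarith
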